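/- If {{-,-}} is a double Poisson bracket on an associative algebra A (so the associated triple bracket vanishes), then the associated single bracket {a,b} = m({{a,b}}) satisfies the Leibniz/Jacobi-type identity {a,{b,c}} = {{a,b},c} + {b,{a,c}} for all a,b,c in A. -/
import Mathlib


/-!
STATEMENT 0: If {{-,-}} is a double Poisson bracket on an associative algebra A
(so the associated triple bracket vanishes), then the associated single bracket
{a,b} = m({{a,b}}) satisfies {a,{b,c}} = {{a,b},c} + {b,{a,c}}.
-/

open TensorProduct

namespace Stmt0

variable {R A : Type*} [CommRing R] [Ring A] [Algebra R A]

/-- The cyclic permutation τ_(123) on A⊗A⊗A : x⊗y⊗z ↦ z⊗x⊗y. -/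
noncomputable def cyc3 (R A : Type*) [CommRing R] [Ring A] [Algebra R A] :
    (A ⊗[R] A) ⊗[R] A →ₗ[R] (A ⊗[R] A) ⊗[R] A :=
  ((TensorProduct.assoc R A A A).symm.toLinearMap).comp
    (TensorProduct.comm R (A ⊗[R] A) A).toLinearMap

/-- The triple bracket associated to a binary operation `D`:
{{a,b,c}} = {{a,{{b,c}}}}_L + τ_(123){{b,{{c,a}}}}_L + τ_(132){{c,{{a,b}}}}_L,
where {{a,u⊗v}}_L = {{a,u}}⊗v. -/
noncomputable def tripleBr (D : A →ₗ[R] A →ₗ[R] A ⊗[R] A) (a b c : A) :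
    (A ⊗[R] A) ⊗[R] A :=
  LinearMap.rTensor A (D a) (D b c)
    + cyc3 R A (LinearMap.rTensor A (D b) (D c a))
    + cyc3 R A (cyc3 R A (LinearMap.rTensor A (D c) (D a b)))

/-- The single bracket {a,b} = m({{a,b}}) associated to `D`. -/
noncomputable def sb (D : A →ₗ[R] A →ₗ[R] A ⊗[R] A) (a b : A) : A :=
  LinearMap.mul' R A (D a b)

noncomputable def mu3 : (A ⊗[R] A) ⊗[R] A →ₗ[R] A :=
  (LinearMap.mul' R A).comp (LinearMap.rTensor A (LinearMap.mul' R A))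

lemma cyc3_tmul (x y z : A) :
    cyc3 R A ((x ⊗ₜ[R] y) ⊗ₜ[R] z) = (z ⊗ₜ[R] x) ⊗ₜ[R] y := by
  simp [cyc3]

lemma mu3_tmul (x y z : A) : (mu3 : (A ⊗[R] A) ⊗[R] A →ₗ[R] A) ((x ⊗ₜ[R] y) ⊗ₜ[R] z) = x * y * z := by
  simp [mu3]

lemma mu3_cyc3_tmul (w : A ⊗[R] A) (z : A) :
    mu3 (cyc3 R A (w ⊗ₜ[R] z)) = z * LinearMap.mul' R A w := by
  induction w using TensorProduct.induction_on with
  | zero => simp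
  | tmul x y => rw [cyc3_tmul, mu3_tmul]; simp [mul_assoc]
  | add u v hu hv =>
      rw [add_tmul, map_add, map_add, hu, hv, map_add, mul_add]

lemma mu3_cyc3_cyc3_tmul (x y z : A) :
    mu3 (cyc3 R A (cyc3 R A ((x ⊗ₜ[R] y) ⊗ₜ[R] z))) = y * z * x := by
  rw [cyc3_tmul, cyc3_tmul, mu3_tmul]

lemma mul'_mul_one_tmul (x : A ⊗[R] A) (v : A) :
    LinearMap.mul' R A (x * ((1 : A) ⊗ₜ[R] v)) = LinearMap.mul' R A x * v := by
  induction x using TensorProduct.induction_on with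
  | zero => simp
  | tmul p q => simp [Algebra.TensorProduct.tmul_mul_tmul, mul_assoc]
  | add u w hu hw => rw [add_mul, map_add, hu, hw, map_add, add_mul]

lemma mul'_tmul_one_mul (u : A) (x : A ⊗[R] A) :
    LinearMap.mul' R A ((u ⊗ₜ[R] (1 : A)) * x) = u * LinearMap.mul' R A x := by
  induction x using TensorProduct.induction_on with
  | zero => simp
  | tmul p q => simp [Algebra.TensorProduct.tmul_mul_tmul, mul_assoc]
  | add y w hy hw => rw [mul_add, map_add, hy, hw, map_add, mul_add]

lemma mul'_comm_mul_one_tmul (x : A ⊗[R] A) (v : A) :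
    LinearMap.mul' R A ((TensorProduct.comm R A A) (x * ((1 : A) ⊗ₜ[R] v)))
      = mu3 (cyc3 R A (cyc3 R A (x ⊗ₜ[R] v))) := by
  induction x using TensorProduct.induction_on with
  | zero => simp
  | tmul p q =>
      rw [mu3_cyc3_cyc3_tmul]
      simp [Algebra.TensorProduct.tmul_mul_tmul, mul_assoc]
  | add y w hy hw =>
      rw [add_mul, map_add, map_add, hy, hw, add_tmul, map_add, map_add, map_add]

lemma mul'_comm_tmul_one_mul (u : A) (x : A ⊗[R] A) :
    LinearMap.mul' R A ((TensorProduct.comm R A A) ((u ⊗ₜ[R] (1 : A)) * x))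
      = mu3 (cyc3 R A (cyc3 R A (x ⊗ₜ[R] u))) := by
  induction x using TensorProduct.induction_on with
  | zero => simp
  | tmul p q =>
      rw [mu3_cyc3_cyc3_tmul]
      simp [Algebra.TensorProduct.tmul_mul_tmul, mul_assoc]
  | add y w hy hw =>
      rw [mul_add, map_add, map_add, hy, hw, add_tmul, map_add, map_add, map_add]

lemma comm_rTensor_comm (f : A →ₗ[R] A) (t : A ⊗[R] A) :
    (TensorProduct.comm R A A) (LinearMap.rTensor A f ((TensorProduct.comm R A A) t))
      = LinearMap.lTensor A f t := by
  induction t using TensorProduct.induction_on with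
  | zero => simp
  | tmul u v => simp
  | add u v hu hv => simp [map_add, hu, hv]

section Main
variable (D : A →ₗ[R] A →ₗ[R] A ⊗[R] A)

/-- μ₃ applied to the first-slot term. -/
lemma mu3_rTensor (a : A) (t : A ⊗[R] A) :
    mu3 (LinearMap.rTensor A (D a) t)
      = LinearMap.mul' R A (LinearMap.rTensor A ((LinearMap.mul' R A).comp (D a)) t) := by
  induction t using TensorProduct.induction_on with
  | zero => simp
  | tmul u v =>
      rw [LinearMap.rTensor_tmul, LinearMap.rTensor_tmul]
      simp [mu3]
  | add u v hu hv => simp [map_add, hu, hv]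

lemma mu3_cyc3_rTensor (b : A) (t : A ⊗[R] A) :
    mu3 (cyc3 R A (LinearMap.rTensor A (D b) t))
      = LinearMap.mul' R A ((TensorProduct.comm R A A)
          (LinearMap.rTensor A ((LinearMap.mul' R A).comp (D b)) t)) := by
  induction t using TensorProduct.induction_on with
  | zero => simp
  | tmul p q =>
      rw [LinearMap.rTensor_tmul, mu3_cyc3_tmul, LinearMap.rTensor_tmul]
      simp
  | add u v hu hv => simp [map_add, hu, hv]

/-- {a, uv} = {a,u}v + u{a,v}, lifted. -/
lemma sb_of_mul (hder : ∀ a b c : A, D a (b * c) = D a b * (1 ⊗ₜ[R] c) + (b ⊗ₜ[R] 1) * D a c)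
    (a : A) (t : A ⊗[R] A) :
    LinearMap.mul' R A (D a (LinearMap.mul' R A t))
      = LinearMap.mul' R A (LinearMap.rTensor A ((LinearMap.mul' R A).comp (D a)) t)
        + LinearMap.mul' R A (LinearMap.lTensor A ((LinearMap.mul' R A).comp (D a)) t) := by
  induction t using TensorProduct.induction_on with
  | zero => simp
  | tmul u v =>
      rw [LinearMap.mul'_apply, hder, map_add, mul'_mul_one_tmul, mul'_tmul_one_mul,
        LinearMap.rTensor_tmul, LinearMap.lTensor_tmul]
      simp
  | add u v hu hv =>
      simp only [map_add, LinearMap.add_apply, hu, hv]; abel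

/-- {x, c} for x = mul' t, via antisymmetry. -/
lemma sb_mul_left (hder : ∀ a b c : A, D a (b * c) = D a b * (1 ⊗ₜ[R] c) + (b ⊗ₜ[R] 1) * D a c)
    (hanti : ∀ a b : A, D a b = - (TensorProduct.comm R A A) (D b a))
    (c : A) (t : A ⊗[R] A) :
    LinearMap.mul' R A (D (LinearMap.mul' R A t) c)
      = - mu3 (cyc3 R A (cyc3 R A (LinearMap.rTensor A (D c) t)))
        - mu3 (cyc3 R A (cyc3 R A (LinearMap.rTensor A (D c) ((TensorProduct.comm R A A) t)))) := by
  induction t using TensorProduct.induction_on with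
  | zero => simp
  | tmul u v =>
      rw [LinearMap.mul'_apply, hanti (u * v) c, hder, map_neg, map_add, map_add,
        mul'_comm_mul_one_tmul, mul'_comm_tmul_one_mul,
        TensorProduct.comm_tmul, LinearMap.rTensor_tmul, LinearMap.rTensor_tmul]
      abel
  | add u v hu hv =>
      simp only [map_add, LinearMap.add_apply, hu, hv]; abel

end Main

/-- The Leibniz/Jacobi identity for the single bracket of a double Poisson bracket. -/
theorem leibniz_of_doublePoisson
    (D : A →ₗ[R] A →ₗ[R] A ⊗[R] A)
    -- derivation in the second argument for the outer bimodule structure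
    (hder : ∀ a b c : A, D a (b * c) = D a b * (1 ⊗ₜ[R] c) + (b ⊗ₜ[R] 1) * D a c)
    -- antisymmetry {{a,b}} = -{{b,a}}°
    (hanti : ∀ a b : A, D a b = - (TensorProduct.comm R A A) (D b a))
    -- the associated triple bracket vanishes (double Poisson)
    (htriple : ∀ a b c : A, tripleBr D a b c = 0) :
    ∀ a b c : A, sb D a (sb D b c) = sb D (sb D a b) c + sb D b (sb D a c) := by
  intro a b c
  set m := LinearMap.mul' R A with hm
  set S : A → A →ₗ[R] A := fun x => (LinearMap.mul' R A).comp (D x) with hS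
  -- evaluate μ₃ on a triple bracket
  have key : ∀ x y z : A,
      m (LinearMap.rTensor A (S x) (D y z))
        - m (LinearMap.lTensor A (S y) (D x z))
        + mu3 (cyc3 R A (cyc3 R A (LinearMap.rTensor A (D z) (D x y)))) = 0 := by
    intro x y z
    have h0 : mu3 (tripleBr D x y z) = 0 := by rw [htriple, map_zero]
    rw [tripleBr, map_add, map_add, mu3_rTensor, mu3_cyc3_rTensor] at h0
    rw [hanti z x, map_neg, map_neg, comm_rTensor_comm] at h0
    simp only [map_neg, LinearMap.neg_apply] at h0
    rw [← h0]
    abel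
  have e1 := key a b c
  have e2 := key b a c
  rw [hanti b a] at e2
  simp only [map_neg] at e2
  -- expand the three single brackets
  have L : sb D a (sb D b c)
      = m (LinearMap.rTensor A (S a) (D b c)) + m (LinearMap.lTensor A (S a) (D b c)) := by
    rw [sb, sb]; exact sb_of_mul D hder a (D b c)
  have R1 : sb D (sb D a b) c
      = - mu3 (cyc3 R A (cyc3 R A (LinearMap.rTensor A (D c) (D a b))))
        - mu3 (cyc3 R A (cyc3 R A (LinearMap.rTensor A (D c) ((TensorProduct.comm R A A) (D a b))))) := by
    rw [sb, sb]; exact sb_mul_left D hder hanti c (D a b)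
  have R2 : sb D b (sb D a c)
      = m (LinearMap.rTensor A (S b) (D a c)) + m (LinearMap.lTensor A (S b) (D a c)) := by
    rw [sb, sb]; exact sb_of_mul D hder b (D a c)
  rw [L, R1, R2]
  set α := m (LinearMap.rTensor A (S a) (D b c)) with hA
  set β := m (LinearMap.lTensor A (S a) (D b c)) with hB
  set γ := m (LinearMap.rTensor A (S b) (D a c)) with hC
  set δ := m (LinearMap.lTensor A (S b) (D a c)) with hD
  set G := mu3 (cyc3 R A (cyc3 R A (LinearMap.rTensor A (D c) (D a b)))) with hG
  set G' := mu3 (cyc3 R A (cyc3 R A (LinearMap.rTensor A (D c) ((TensorProduct.comm R A A) (D a b))))) with hG'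
  have hα : α = δ - G := by
    rw [← sub_eq_zero, show α - (δ - G) = α - δ + G from by abel]; exact e1
  have hβ : β = γ - G' := by
    rw [← sub_eq_zero, show β - (γ - G') = -(γ - β + -G') from by abel, e2, neg_zero]
  rw [hα, hβ]; abel


end Stmt0
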